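/- Under the same setup as the (N,φ)-sequence bound, if additionally both partition refinements S_A, S_B have the property that whenever a part is split it is split into two parts of equal cardinality, then any (N,φ)-sequence C satisfies |C| ≤ 6·(2^ℓ/φ). -/

import Mathlib

/-- A time-indexed partition refinement of a finite set `Ω`: `S t x` is the part
with coordinate `x` (a binary string) at time `t`. The root at time `0` is `Ω`,
values are stable once defined, parts are nonempty, and whenever a child is
defined its sibling is defined, the parent was defined at the previous time,
and the two children partition the parent. -/
structure TPartitionRefinement (Ω : Type*) [Fintype Ω] [DecidableEq Ω] where
  S : ℕ → List Bool → Option (Finset Ω)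
  root : S 0 [] = some Finset.univ
  stable : ∀ t t' x v, t ≤ t' → S t x = some v → S t' x = some v
  nonempty : ∀ t x v, S t x = some v → v.Nonempty
  children : ∀ t x, (S t (x ++ [false])).isSome →
      (S t (x ++ [true])).isSome ∧ (S (t - 1) x).isSome
  children' : ∀ t x, (S t (x ++ [true])).isSome →
      (S t (x ++ [false])).isSome ∧ (S (t - 1) x).isSome
  split : ∀ t x v v₀ v₁, S t x = some v → S t (x ++ [false]) = some v₀ →
    S t (x ++ [true]) = some v₁ → Disjoint v₀ v₁ ∧ v₀ ∪ v₁ = v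

variable {Ω : Type*} [Fintype Ω] [DecidableEq Ω]

/-- A coordinate is terminal at time `t` if its part is defined but neither child is. -/
def TPartitionRefinement.Terminal (P : TPartitionRefinement Ω) (t : ℕ) (x : List Bool) : Prop :=
  (P.S t x).isSome ∧ P.S t (x ++ [false]) = none ∧ P.S t (x ++ [true]) = none

/-- An evaluation function: nonnegative, nondecreasing in time and in extensions
of coordinates. -/
def IsEvaluation (ν : ℕ → List Bool → ℝ) : Prop :=
  (∀ t x, 0 ≤ ν t x) ∧ ∀ t t' x x', t ≤ t' → x <+: x' → ν t x ≤ ν t' x'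

/-- Element `a` is `(N,φ)`-good at time `t` w.r.t. a partition evaluation `(P, ν)`:
the terminal part containing `a` was split fewer than `N` times, has more than `φ`
elements, and its evaluation is less than `2`. -/
def Good (P : TPartitionRefinement Ω) (ν : ℕ → List Bool → ℝ) (N φ : ℕ)
    (t : ℕ) (a : Ω) : Prop :=
  ∃ x v, P.S t x = some v ∧ P.Terminal t x ∧ a ∈ v ∧
    x.length < N ∧ φ < v.card ∧ ν t x < 2

/-- A part containing `a` is split at time `t` (a new containing coordinate
becomes defined at `t`). -/
def SplitsOn (P : TPartitionRefinement Ω) (t : ℕ) (a : Ω) : Prop :=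
  ∃ x v, P.S t x = some v ∧ a ∈ v ∧ P.S (t - 1) x = none

/-- Some terminal part containing `a` has evaluation larger than `2` at time `t`. -/
def EvalHigh (P : TPartitionRefinement Ω) (ν : ℕ → List Bool → ℝ) (t : ℕ) (a : Ω) : Prop :=
  ∃ x v, P.S t x = some v ∧ P.Terminal t x ∧ a ∈ v ∧ 2 < ν t x

/-- At time `t`, a part containing `a` is split, or the evaluation of a terminal
part containing `a` becomes larger than `2`. -/
def Event (P : TPartitionRefinement Ω) (ν : ℕ → List Bool → ℝ) (t : ℕ) (a : Ω) : Prop :=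
  SplitsOn P t a ∨ (EvalHigh P ν t a ∧ ¬ EvalHigh P ν (t - 1) a)

/-- `a` is `(N,φ)`-good at `t` w.r.t. the pair of partition evaluations. -/
def Good2 (PA PB : TPartitionRefinement Ω) (νA νB : ℕ → List Bool → ℝ) (N φ : ℕ)
    (t : ℕ) (a : Ω) : Prop :=
  Good PA νA N φ t a ∧ Good PB νB N φ t a

/-- `a` becomes stale after `t` at `t'` w.r.t. the pair of partition evaluations:
`t'` is the least time `> t` at which, in either refinement, a containing part is
split or a containing part's evaluation becomes larger than `2`. -/
def StaleAfterAt (PA PB : TPartitionRefinement Ω) (νA νB : ℕ → List Bool → ℝ)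
    (t t' : ℕ) (a : Ω) : Prop :=
  t < t' ∧ (Event PA νA t' a ∨ Event PB νB t' a) ∧
    ∀ u, t < u → u < t' → ¬ (Event PA νA u a ∨ Event PB νB u a)

namespace StmtAux

variable (P : TPartitionRefinement Ω)

lemma stable_isSome {t t' : ℕ} {x : List Bool} (h : t ≤ t') (hs : (P.S t x).isSome) :
    (P.S t' x).isSome := by
  obtain ⟨v, hv⟩ := Option.isSome_iff_exists.1 hs
  exact Option.isSome_iff_exists.2 ⟨v, P.stable t t' x v h hv⟩

lemma parent_defined {t : ℕ} {z : List Bool} {b : Bool} {v : Finset Ω}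
    (h : P.S t (z ++ [b]) = some v) : ∃ w, P.S t z = some w ∧ v ⊆ w := by
  have hb : (P.S t (z ++ [b])).isSome := by rw [h]; rfl
  have hboth : (P.S t (z ++ [false])).isSome ∧ (P.S t (z ++ [true])).isSome ∧
      (P.S (t-1) z).isSome := by
    cases b with
    | false => exact ⟨hb, (P.children t z hb).1, (P.children t z hb).2⟩
    | true => exact ⟨(P.children' t z hb).1, hb, (P.children' t z hb).2⟩
  obtain ⟨w, hw⟩ := Option.isSome_iff_exists.1 hboth.2.2
  have hwt : P.S t z = some w := P.stable (t-1) t z w (Nat.sub_le t 1) hw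
  obtain ⟨v₀, hv₀⟩ := Option.isSome_iff_exists.1 hboth.1
  obtain ⟨v₁, hv₁⟩ := Option.isSome_iff_exists.1 hboth.2.1
  obtain ⟨-, hunion⟩ := P.split t z w v₀ v₁ hwt hv₀ hv₁
  refine ⟨w, hwt, ?_⟩
  cases b with
  | false =>
    rw [hv₀] at h; cases h; rw [← hunion]; exact Finset.subset_union_left
  | true =>
    rw [hv₁] at h; cases h; rw [← hunion]; exact Finset.subset_union_right

lemma siblings_disjoint {t : ℕ} {z : List Bool} {v₀ v₁ : Finset Ω}
    (h₀ : P.S t (z ++ [false]) = some v₀) (h₁ : P.S t (z ++ [true]) = some v₁) :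
    Disjoint v₀ v₁ := by
  obtain ⟨w, hw, -⟩ := parent_defined P h₀
  exact (P.split t z w v₀ v₁ hw h₀ h₁).1

lemma prefix_subset {t : ℕ} {x y : List Bool} {w : Finset Ω}
    (hxy : x <+: y) (hy : P.S t y = some w) : ∃ v, P.S t x = some v ∧ w ⊆ v := by
  obtain ⟨s, rfl⟩ := hxy
  induction s using List.reverseRecOn generalizing w with
  | nil => exact ⟨w, by simpa using hy, subset_rfl⟩
  | append_singleton s b ih =>
    rw [← List.append_assoc] at hy
    obtain ⟨w', hw', hsub⟩ := parent_defined P hy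
    obtain ⟨v, hv, hsub'⟩ := ih hw'
    exact ⟨v, hv, hsub.trans hsub'⟩

lemma comparable {t : ℕ} {a : Ω} : ∀ n (x y : List Bool) (v w : Finset Ω),
    x.length + y.length ≤ n → P.S t x = some v → P.S t y = some w →
    a ∈ v → a ∈ w → x <+: y ∨ y <+: x := by
  intro n
  induction n with
  | zero =>
    intro x y v w hn _ _ _ _
    have hx : x = [] := List.length_eq_zero_iff.1 (by omega)
    exact Or.inl (hx ▸ List.nil_prefix)
  | succ n ih =>
    intro x y v w hn hx hy hav haw
    rcases List.eq_nil_or_concat x with rfl | ⟨x', b, rfl⟩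
    · exact Or.inl List.nil_prefix
    rcases List.eq_nil_or_concat y with rfl | ⟨y', c, rfl⟩
    · exact Or.inr List.nil_prefix
    simp only [List.concat_eq_append] at hx hy hn ⊢
    obtain ⟨vp, hvp, hvsub⟩ := parent_defined P hx
    obtain ⟨wp, hwp, hwsub⟩ := parent_defined P hy
    have hlen : x'.length + y'.length ≤ n := by
      simp only [List.length_append, List.length_singleton] at hn; omega
    have hcomp := ih x' y' vp wp hlen hvp hwp (hvsub hav) (hwsub haw)
    -- helper for the asymmetric case
    have key : ∀ (x' y' : List Bool) (b c : Bool) (v w : Finset Ω),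
        P.S t (x' ++ [b]) = some v → P.S t (y' ++ [c]) = some w →
        a ∈ v → a ∈ w → x' <+: y' → x' ++ [b] <+: y' ++ [c] := by
      intro x' y' b c v w hx hy hav haw hpre
      rcases eq_or_ne x' y' with rfl | h
      case inr =>
        -- x' proper prefix of y' : next bit d
        obtain ⟨s, rfl⟩ := hpre
        have hs : s ≠ [] := by rintro rfl; simp at h
        obtain ⟨d, s', rfl⟩ := List.exists_cons_of_ne_nil hs
        have hyd : x' ++ [d] <+: (x' ++ (d :: s')) ++ [c] := by
          refine ⟨s' ++ [c], by simp⟩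
        obtain ⟨wd, hwd, hsubd⟩ := prefix_subset P hyd hy
        by_cases hbd : b = d
        · subst hbd; exact ⟨s' ++ [c], by simp⟩
        · exfalso
          have hdisj : Disjoint v wd := by
            cases b with
            | false =>
              cases d with
              | false => simp at hbd
              | true => exact siblings_disjoint P hx hwd
            | true =>
              cases d with
              | false => exact (siblings_disjoint P hwd hx).symm
              | true => simp at hbd
          exact Finset.disjoint_left.1 hdisj hav (hsubd haw)
      case inl =>
        by_cases hbc : b = c
        · subst hbc; exact List.prefix_rfl
        · exfalso
          have hdisj : Disjoint v w := by
            cases b with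
            | false =>
              cases c with
              | false => simp at hbc
              | true => exact siblings_disjoint P hx hy
            | true =>
              cases c with
              | false => exact (siblings_disjoint P hy hx).symm
              | true => simp at hbc
          exact Finset.disjoint_left.1 hdisj hav haw
    rcases hcomp with h | h
    · exact Or.inl (key x' y' b c v w hx hy hav haw h)
    · exact Or.inr (key y' x' c b w v hy hx haw hav h)

lemma comparable' {t : ℕ} {a : Ω} {x y : List Bool} {v w : Finset Ω}
    (hx : P.S t x = some v) (hy : P.S t y = some w)
    (hav : a ∈ v) (haw : a ∈ w) : x <+: y ∨ y <+: x :=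
  comparable P _ x y v w le_rfl hx hy hav haw

/-- a prefix of a defined coordinate, which is terminal, equals it. -/
lemma terminal_prefix_eq {t : ℕ} {x y : List Bool} {w : Finset Ω}
    (hterm : P.Terminal t x) (hxy : x <+: y) (hy : P.S t y = some w) : x = y := by
  rcases eq_or_ne x y with h | h
  · exact h
  exfalso
  obtain ⟨s, rfl⟩ := hxy
  have hs : s ≠ [] := by rintro rfl; simp at h
  obtain ⟨d, s', rfl⟩ := List.exists_cons_of_ne_nil hs
  have hyd : x ++ [d] <+: x ++ (d :: s') := ⟨s', by simp⟩
  obtain ⟨wd, hwd, -⟩ := prefix_subset P hyd hy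
  cases d with
  | false => rw [hterm.2.1] at hwd; cases hwd
  | true => rw [hterm.2.2] at hwd; cases hwd

lemma terminal_unique {t : ℕ} {a : Ω} {x y : List Bool} {v w : Finset Ω}
    (hx : P.S t x = some v) (hy : P.S t y = some w)
    (htx : P.Terminal t x) (hty : P.Terminal t y)
    (hav : a ∈ v) (haw : a ∈ w) : x = y := by
  rcases comparable' P hx hy hav haw with h | h
  · exact terminal_prefix_eq P htx h hy
  · exact (terminal_prefix_eq P hty h hx).symm

lemma halfcard
    (hhalf : ∀ t x v₀ v₁, P.S t (x ++ [false]) = some v₀ →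
      P.S t (x ++ [true]) = some v₁ → v₀.card = v₁.card) :
    ∀ (x : List Bool) (t : ℕ) (v : Finset Ω), P.S t x = some v →
      v.card * 2 ^ x.length = Fintype.card Ω := by
  intro x
  induction x using List.reverseRecOn with
  | nil =>
    intro t v hv
    have h := P.stable 0 t [] Finset.univ (Nat.zero_le t) P.root
    rw [h] at hv
    cases hv
    simp
  | append_singleton y b ih =>
    intro t v hv
    have hb : (P.S t (y ++ [b])).isSome := by rw [hv]; rfl
    have hboth : (P.S t (y ++ [false])).isSome ∧ (P.S t (y ++ [true])).isSome := by
      cases b with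
      | false => exact ⟨hb, (P.children t y hb).1⟩
      | true => exact ⟨(P.children' t y hb).1, hb⟩
    obtain ⟨v₀, hv₀⟩ := Option.isSome_iff_exists.1 hboth.1
    obtain ⟨v₁, hv₁⟩ := Option.isSome_iff_exists.1 hboth.2
    obtain ⟨w, hw, -⟩ := parent_defined P hv₀
    obtain ⟨hdisj, hunion⟩ := P.split t y w v₀ v₁ hw hv₀ hv₁
    have hcards : v₀.card = v₁.card := hhalf t y v₀ v₁ hv₀ hv₁
    have hwcard : w.card = v₀.card + v₁.card := by
      rw [← hunion]; exact Finset.card_union_of_disjoint hdisj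
    have hvcard : v.card = v₀.card := by
      cases b with
      | false => rw [hv₀] at hv; cases hv; rfl
      | true => rw [hv₁] at hv; cases hv; omega
    have hwih := ih t w hw
    have hlen : (y ++ [b]).length = y.length + 1 := by simp
    rw [hlen, pow_succ, ← hwih]
    rw [hvcard, hwcard, ← hcards]
    ring

lemma first_defined {t : ℕ} {x : List Bool} (h : (P.S t x).isSome) :
    ∃ u, u ≤ t ∧ (P.S u x).isSome ∧ (u = 0 ∨ P.S (u - 1) x = none) := by
  classical
  have hex : ∃ u, (P.S u x).isSome = true := ⟨t, h⟩
  refine ⟨Nat.find hex, Nat.find_le h, Nat.find_spec hex, ?_⟩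
  rcases Nat.eq_zero_or_pos (Nat.find hex) with h0 | h0
  · exact Or.inl h0
  · refine Or.inr (Option.not_isSome_iff_eq_none.1 ?_)
    have := Nat.find_min hex (m := Nat.find hex - 1) (by omega)
    simpa using this

lemma no_split_persist {τ t : ℕ} {x : List Bool} {v : Finset Ω} {a : Ω}
    (hv : P.S τ x = some v) (hterm : P.Terminal τ x) (ha : a ∈ v)
    (hτt : τ ≤ t) (hns : ∀ u, τ < u → u ≤ t → ¬ SplitsOn P u a) :
    P.S t x = some v ∧ P.Terminal t x := by
  have hvt : P.S t x = some v := P.stable τ t x v hτt hv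
  have hchild : ∀ b : Bool, P.S t (x ++ [b]) = none := by
    intro b
    by_contra hb
    have hbs : (P.S t (x ++ [b])).isSome := Option.ne_none_iff_isSome.1 hb
    have hboth : (P.S t (x ++ [false])).isSome ∧ (P.S t (x ++ [true])).isSome := by
      cases b with
      | false => exact ⟨hbs, (P.children t x hbs).1⟩
      | true => exact ⟨(P.children' t x hbs).1, hbs⟩
    obtain ⟨c₀, hc₀⟩ := Option.isSome_iff_exists.1 hboth.1
    obtain ⟨c₁, hc₁⟩ := Option.isSome_iff_exists.1 hboth.2
    obtain ⟨-, hunion⟩ := P.split t x v c₀ c₁ hvt hc₀ hc₁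
    have hmem : a ∈ c₀ ∨ a ∈ c₁ := by
      rw [← Finset.mem_union, hunion]; exact ha
    -- pick the child containing a
    obtain ⟨b', c', hc', hac'⟩ : ∃ (b' : Bool) (c' : Finset Ω),
        P.S t (x ++ [b']) = some c' ∧ a ∈ c' := by
      rcases hmem with h | h
      · exact ⟨false, c₀, hc₀, h⟩
      · exact ⟨true, c₁, hc₁, h⟩
    obtain ⟨u, hut, hus, humin⟩ := first_defined P (x := x ++ [b'])
      (Option.isSome_iff_exists.2 ⟨c', hc'⟩)
    have huτ : τ < u := by
      by_contra hle
      push_neg at hle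
      obtain ⟨c'', hc''⟩ := Option.isSome_iff_exists.1 hus
      have := P.stable u τ (x ++ [b']) c'' hle hc''
      cases b' with
      | false => rw [hterm.2.1] at this; cases this
      | true => rw [hterm.2.2] at this; cases this
    have hnone : P.S (u - 1) (x ++ [b']) = none := by
      rcases humin with h0 | h0
      · omega
      · exact h0
    obtain ⟨c'', hc''⟩ := Option.isSome_iff_exists.1 hus
    have hcc : c'' = c' := by
      have := P.stable u t (x ++ [b']) c'' hut hc''
      rw [hc'] at this; exact (Option.some_inj.1 this).symm
    exact hns u huτ hut ⟨x ++ [b'], c', hcc ▸ hc'', hac', hnone⟩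
  exact ⟨hvt, Option.isSome_iff_exists.2 ⟨v, hvt⟩, hchild false, hchild true⟩

/-- In the split case, the good terminal node itself gets split at time `t1`. -/
lemma split_case {τ t1 : ℕ} {a : Ω} {x : List Bool} {v : Finset Ω}
    (hv : P.S τ x = some v) (hterm : P.Terminal τ x) (ha : a ∈ v) (hτ : τ < t1)
    (hns : ∀ u, τ < u → u < t1 → ¬ SplitsOn P u a)
    (hsp : SplitsOn P t1 a) : (P.S t1 (x ++ [false])).isSome := by
  obtain ⟨z, c, hz, hac, hznone⟩ := hsp
  -- z is nonempty
  have hroot : P.S (t1 - 1) [] = some Finset.univ :=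
    P.stable 0 (t1 - 1) [] Finset.univ (Nat.zero_le _) P.root
  rcases List.eq_nil_or_concat z with rfl | ⟨z', b, rfl⟩
  · rw [hroot] at hznone; cases hznone
  simp only [List.concat_eq_append] at hz hznone
  -- persistence of x up to t1 - 1
  have hpersist := no_split_persist P hv hterm ha (t := t1 - 1) (by omega)
    (fun u hu hu' => hns u hu (by omega))
  obtain ⟨hvt, htermt⟩ := hpersist
  -- parent z' is defined at t1 - 1
  have hzb : (P.S t1 (z' ++ [b])).isSome := by rw [hz]; rfl
  have hz'def : (P.S (t1 - 1) z').isSome := by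
    cases b with
    | false => exact (P.children t1 z' hzb).2
    | true => exact (P.children' t1 z' hzb).2
  obtain ⟨w', hw'⟩ := Option.isSome_iff_exists.1 hz'def
  have hw't1 : P.S t1 z' = some w' := P.stable (t1-1) t1 z' w' (Nat.sub_le _ _) hw'
  have hacw : a ∈ w' := by
    obtain ⟨w, hw, hsub⟩ := parent_defined P hz
    rw [hw't1] at hw; cases hw
    exact hsub hac
  -- z' = x
  have hz'x : z' = x := by
    rcases comparable' P hw' hvt hacw ha with h | h
    · -- z' <+: x ; cannot be proper since children of z' undefined at t1 - 1
      rcases eq_or_ne z' x with h' | h'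
      · exact h'
      exfalso
      obtain ⟨ss, rfl⟩ := h
      have hss : ss ≠ [] := by rintro rfl; simp at h'
      obtain ⟨d, ss', rfl⟩ := List.exists_cons_of_ne_nil hss
      have hpref : z' ++ [d] <+: z' ++ (d :: ss') := ⟨ss', by simp⟩
      obtain ⟨wd, hwd, -⟩ := prefix_subset P hpref hvt
      -- both children of z' are none at t1 - 1
      have hnone' : ∀ b' : Bool, P.S (t1 - 1) (z' ++ [b']) = none := by
        intro b'
        by_contra hb'
        have hbs' : (P.S (t1-1) (z' ++ [b'])).isSome := Option.ne_none_iff_isSome.1 hb'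
        have : (P.S (t1-1) (z' ++ [b])).isSome := by
          cases b' with
          | false => cases b with
            | false => exact hbs'
            | true => exact (P.children (t1-1) z' hbs').1
          | true => cases b with
            | false => exact (P.children' (t1-1) z' hbs').1
            | true => exact hbs'
        rw [hznone] at this; cases this
      rw [hnone' d] at hwd; cases hwd
    · exact (terminal_prefix_eq P htermt h hw').symm
  cases b with
  | false => exact hz'x ▸ hzb
  | true => exact hz'x ▸ (P.children' t1 z' hzb).1

/-- In the eval case (no split at `t1`), the good terminal node's evaluation
exceeds 2 at time `t1`. -/
lemma eval_case {ν : ℕ → List Bool → ℝ} {τ t1 : ℕ} {a : Ω} {x : List Bool} {v : Finset Ω}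
    (hv : P.S τ x = some v) (hterm : P.Terminal τ x) (ha : a ∈ v) (hτ : τ ≤ t1)
    (hns : ∀ u, τ < u → u ≤ t1 → ¬ SplitsOn P u a)
    (heh : EvalHigh P ν t1 a) : 2 < ν t1 x := by
  obtain ⟨hvt, htermt⟩ := no_split_persist P hv hterm ha hτ hns
  obtain ⟨y, w, hy, htermy, haw, hν⟩ := heh
  have : y = x := terminal_unique P hy hvt htermy htermt haw ha
  rwa [this] at hν

/-- Binary encoding of lists with a leading 1; injective. -/
def enc : List Bool → ℕ
  | [] => 1
  | b :: x => 2 * enc x + b.toNat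

lemma enc_pos : ∀ x, 1 ≤ enc x
  | [] => le_refl 1
  | b :: x => by
    have := enc_pos x
    simp only [enc]
    omega

lemma enc_lt : ∀ x : List Bool, enc x < 2 ^ (x.length + 1)
  | [] => by simp [enc]
  | b :: x => by
    have h1 := enc_lt x
    have h2 : (2:ℕ) ^ (x.length + 1 + 1) = 2 * 2 ^ (x.length + 1) := by ring
    have hb : b.toNat ≤ 1 := Bool.toNat_le b
    simp only [enc, List.length_cons, h2]
    omega

lemma enc_inj : ∀ x y : List Bool, enc x = enc y → x = y
  | [], [], _ => rfl
  | [], b :: y, h => by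
    have := enc_pos y; simp only [enc] at h
    have hb : b.toNat ≤ 1 := Bool.toNat_le b
    omega
  | b :: x, [], h => by
    have := enc_pos x; simp only [enc] at h
    have hb : b.toNat ≤ 1 := Bool.toNat_le b
    omega
  | b :: x, c :: y, h => by
    simp only [enc] at h
    have hbc : b = c := by
      cases b <;> cases c <;> simp_all [Bool.toNat] <;> omega
    subst hbc
    have : enc x = enc y := by cases b <;> simp_all [Bool.toNat]
    rw [enc_inj x y this]

end StmtAux

/-- If moreover both partition refinements are half-splitting (every split produces
two parts of equal cardinality), then an `(N,φ)`-sequence has at most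
`6 * (2^ℓ / φ)` elements. -/
theorem stmt4 {Ω : Type*} [Fintype Ω] [DecidableEq Ω] (ℓ N φ k : ℕ) (hφ : 0 < φ)
    (hΩ : Fintype.card Ω = 2 ^ ℓ)
    (PA PB : TPartitionRefinement Ω) (νA νB : ℕ → List Bool → ℝ)
    (hνA : IsEvaluation νA) (hνB : IsEvaluation νB)
    (hhalfA : ∀ t x v₀ v₁, PA.S t (x ++ [false]) = some v₀ →
      PA.S t (x ++ [true]) = some v₁ → v₀.card = v₁.card)
    (hhalfB : ∀ t x v₀ v₁, PB.S t (x ++ [false]) = some v₀ →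
      PB.S t (x ++ [true]) = some v₁ → v₀.card = v₁.card)
    (s : Fin k → Ω) (τ : Fin (k + 1) → ℕ) (hτ0 : τ 0 = 0)
    (hgood : ∀ i : Fin k, Good2 PA PB νA νB N φ (τ i.castSucc) (s i))
    (hstale : ∀ i : Fin k, (i : ℕ) + 1 < k →
      StaleAfterAt PA PB νA νB (τ i.castSucc) (τ i.succ) (s i)) :
    (k : ℝ) ≤ 6 * ((2 : ℝ) ^ ℓ / φ) := by
  classical
  have hφR : (0:ℝ) < (φ:ℝ) := by exact_mod_cast hφ
  rcases Nat.eq_zero_or_pos k with rfl | hk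
  · simp only [Nat.cast_zero]
    positivity
  have hφℓ : φ < 2 ^ ℓ := by
    obtain ⟨⟨x, v, hxv, -, -, -, hcard, -⟩, -⟩ := hgood ⟨0, hk⟩
    have h1 : v.card ≤ Fintype.card Ω := Finset.card_le_univ v
    omega
  have hφℓR : (φ:ℝ) < (2:ℝ) ^ ℓ := by exact_mod_cast hφℓ
  have hX : (1:ℝ) < (2:ℝ) ^ ℓ / (φ:ℝ) := by
    rw [lt_div_iff₀ hφR, one_mul]
    exact hφℓR
  rcases le_or_gt k 1 with hk1 | hk2
  · have : (k:ℝ) ≤ 1 := by exact_mod_cast hk1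
    nlinarith
  -- now k ≥ 2. Set up the time function T.
  set T : ℕ → ℕ := fun n => τ ⟨min n k, by omega⟩ with hTdef
  have hTeq : ∀ i : Fin k, τ i.castSucc = T (i:ℕ) ∧ τ i.succ = T ((i:ℕ) + 1) := by
    intro i
    constructor
    · rw [hTdef]
      congr 1
      exact Fin.ext (by simp [Nat.min_eq_left i.2.le])
    · rw [hTdef]
      congr 1
      exact Fin.ext (by simp [Nat.min_eq_left i.2])
  have hgood' : ∀ i : ℕ, (hi : i < k) → Good2 PA PB νA νB N φ (T i) (s ⟨i, hi⟩) := by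
    intro i hi
    have := hgood ⟨i, hi⟩
    rwa [(hTeq ⟨i, hi⟩).1] at this
  have hstale' : ∀ i : ℕ, (hi : i + 1 < k) →
      StaleAfterAt PA PB νA νB (T i) (T (i+1)) (s ⟨i, by omega⟩) := by
    intro i hi
    have := hstale ⟨i, by omega⟩ hi
    rwa [(hTeq ⟨i, by omega⟩).1, (hTeq ⟨i, by omega⟩).2] at this
  have hmono : ∀ p q : ℕ, p ≤ q → q < k → T p ≤ T q := by
    intro p q hpq hq
    induction q, hpq using Nat.le_induction with
    | base => exact le_rfl
    | succ q hq' ih =>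
      have h1 : T p ≤ T q := ih (by omega)
      have h2 : T q < T (q + 1) := (hstale' q hq).1
      omega
  -- trees indexed by Bool
  set PT : Bool → TPartitionRefinement Ω := fun tb => cond tb PB PA with hPT
  set νT : Bool → (ℕ → List Bool → ℝ) := fun tb => cond tb νB νA with hνT
  have hνTe : ∀ tb, IsEvaluation (νT tb) := by
    intro tb; cases tb
    · exact hνA
    · exact hνB
  have hhalfT : ∀ tb t x v₀ v₁, (PT tb).S t (x ++ [false]) = some v₀ →
      (PT tb).S t (x ++ [true]) = some v₁ → v₀.card = v₁.card := by
    intro tb; cases tb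
    · exact hhalfA
    · exact hhalfB
  -- the charging map
  have hcharge : ∀ i : ℕ, (hi : i + 1 < k) → ∃ (tb : Bool) (x : List Bool) (v : Finset Ω),
      (PT tb).S (T i) x = some v ∧ (PT tb).Terminal (T i) x ∧ s ⟨i, by omega⟩ ∈ v ∧
      φ < v.card ∧
      (((PT tb).S (T (i+1)) (x ++ [false])).isSome ∨ 2 < νT tb (T (i+1)) x) := by
    intro i hi
    obtain ⟨hlt, hev, hmin⟩ := hstale' i hi
    obtain ⟨hgA, hgB⟩ := hgood' i (by omega)
    obtain ⟨xA, vA, hxA, htA, haA, -, hcA, -⟩ := hgA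
    obtain ⟨xB, vB, hxB, htB, haB, -, hcB, -⟩ := hgB
    have hnsA : ∀ u, T i < u → u < T (i+1) → ¬ SplitsOn PA u (s ⟨i, by omega⟩) :=
      fun u h1 h2 hs => hmin u h1 h2 (Or.inl (Or.inl hs))
    have hnsB : ∀ u, T i < u → u < T (i+1) → ¬ SplitsOn PB u (s ⟨i, by omega⟩) :=
      fun u h1 h2 hs => hmin u h1 h2 (Or.inr (Or.inl hs))
    by_cases hsA : SplitsOn PA (T (i+1)) (s ⟨i, by omega⟩)
    · exact ⟨false, xA, vA, hxA, htA, haA, hcA,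
        Or.inl (StmtAux.split_case PA hxA htA haA hlt hnsA hsA)⟩
    by_cases hsB : SplitsOn PB (T (i+1)) (s ⟨i, by omega⟩)
    · exact ⟨true, xB, vB, hxB, htB, haB, hcB,
        Or.inl (StmtAux.split_case PB hxB htB haB hlt hnsB hsB)⟩
    have hnsA' : ∀ u, T i < u → u ≤ T (i+1) → ¬ SplitsOn PA u (s ⟨i, by omega⟩) := by
      intro u h1 h2
      rcases eq_or_lt_of_le h2 with rfl | h2'
      · exact hsA
      · exact hnsA u h1 h2'
    have hnsB' : ∀ u, T i < u → u ≤ T (i+1) → ¬ SplitsOn PB u (s ⟨i, by omega⟩) := by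
      intro u h1 h2
      rcases eq_or_lt_of_le h2 with rfl | h2'
      · exact hsB
      · exact hnsB u h1 h2'
    rcases hev with hevA | hevB
    · rcases hevA with hs | ⟨heh, -⟩
      · exact absurd hs hsA
      · exact ⟨false, xA, vA, hxA, htA, haA, hcA,
          Or.inr (StmtAux.eval_case PA hxA htA haA hlt.le hnsA' heh)⟩
    · rcases hevB with hs | ⟨heh, -⟩
      · exact absurd hs hsB
      · exact ⟨true, xB, vB, hxB, htB, haB, hcB,
          Or.inr (StmtAux.eval_case PB hxB htB haB hlt.le hnsB' heh)⟩
  choose tb xx vv h1 h2 h3 h4 h5 using hcharge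
  -- length bound
  have hlogℓ : Nat.log 2 φ + 1 ≤ ℓ := Nat.log_lt_of_lt_pow hφ.ne' hφℓ
  set L : ℕ := ℓ - Nat.log 2 φ - 1 with hLdef
  have hlenbound : ∀ (c d : ℕ), φ < c → c * 2 ^ d = 2 ^ ℓ → d ≤ L := by
    intro c d hc hcd
    have hd : d ≤ ℓ := by
      by_contra h
      push_neg at h
      have h2 : (2:ℕ) ^ ℓ < 2 ^ d := Nat.pow_lt_pow_right one_lt_two h
      have hc1 : 1 ≤ c := by omega
      nlinarith
    have hc2 : c = 2 ^ (ℓ - d) := by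
      have he : (2:ℕ) ^ ℓ = 2 ^ (ℓ - d) * 2 ^ d := by
        rw [← pow_add]
        congr 1
        omega
      rw [he] at hcd
      exact Nat.eq_of_mul_eq_mul_right (Nat.pow_pos (n := d) (by norm_num)) hcd
    have hlog : Nat.log 2 φ < ℓ - d := Nat.log_lt_of_lt_pow hφ.ne' (hc2 ▸ hc)
    omega
  have hlen : ∀ i (hi : i + 1 < k), (xx i hi).length ≤ L := by
    intro i hi
    have hcc := StmtAux.halfcard (PT (tb i hi)) (hhalfT _) (xx i hi) (T i) (vv i hi) (h1 i hi)
    rw [hΩ] at hcc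
    exact hlenbound _ _ (h4 i hi) hcc
  -- distinctness
  have hdistinct : ∀ i j (hi : i + 1 < k) (hj : j + 1 < k), i < j →
      tb i hi = tb j hj → xx i hi = xx j hj → False := by
    intro i j hi hj hij htb hxx
    have ht1j : T (i+1) ≤ T j := hmono (i+1) j (by omega) (by omega)
    have htermj := h2 j hj
    rcases h5 i hi with hdead | hdead
    · -- split case: child defined at T (i+1), hence at T j; contradicts terminality
      rw [htb, hxx] at hdead
      have := StmtAux.stable_isSome (PT (tb j hj)) ht1j hdead
      rw [htermj.2.1] at this
      cases this
    · -- eval case: ν > 2 at T (i+1) ≤ T j, but good at T j means < 2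
      rw [htb, hxx] at hdead
      have hmonoν := (hνTe (tb j hj)).2 (T (i+1)) (T j) (xx j hj) (xx j hj) ht1j
        List.prefix_rfl
      -- need ν (T j) (xx j) < 2 : reprove from goodness & uniqueness
      obtain ⟨hgj1, hgj2⟩ := hgood' j (by omega)
      have hgj : Good (PT (tb j hj)) (νT (tb j hj)) N φ (T j) (s ⟨j, by omega⟩) := by
        cases htbj : tb j hj
        · exact hgj1
        · exact hgj2
      obtain ⟨y, w, hy, hty, haw, -, -, hν2⟩ := hgj
      have hyx : y = xx j hj :=
        StmtAux.terminal_unique (PT (tb j hj)) hy (h1 j hj) hty htermj haw (h3 j hj)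
      rw [hyx] at hν2
      linarith
  -- the injection into Fin (2 ^ (L + 2))
  have hFlt : ∀ i : Fin (k - 1), (i:ℕ) + 1 < k := fun i => by
    have := i.2
    omega
  have hcard1 : k - 1 ≤ 2 ^ (L + 2) := by
    have hencb : ∀ i : Fin (k - 1), StmtAux.enc (xx i (hFlt i)) < 2 ^ (L + 1) := by
      intro i
      have he := StmtAux.enc_lt (xx i (hFlt i))
      have hl := hlen i (hFlt i)
      have : (2:ℕ) ^ ((xx i (hFlt i)).length + 1) ≤ 2 ^ (L + 1) :=
        Nat.pow_le_pow_right (by norm_num) (by omega)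
      omega
    let F : Fin (k - 1) → Fin (2 ^ (L + 2)) := fun i =>
      ⟨(if tb i (hFlt i) then 2 ^ (L + 1) else 0) + StmtAux.enc (xx i (hFlt i)), by
        have := hencb i
        have hp : (2:ℕ) ^ (L + 2) = 2 ^ (L + 1) + 2 ^ (L + 1) := by ring
        rcases tb i (hFlt i) with _ | _ <;> simp <;> omega⟩
    have hFinj : Function.Injective F := by
      intro i j hij
      by_contra hne
      have hv : (if tb i (hFlt i) then 2 ^ (L + 1) else 0) + StmtAux.enc (xx i (hFlt i)) =
          (if tb j (hFlt j) then 2 ^ (L + 1) else 0) + StmtAux.enc (xx j (hFlt j)) := by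
        have := congrArg Fin.val hij
        simpa [F] using this
      have htbeq : tb i (hFlt i) = tb j (hFlt j) := by
        by_contra htbne
        have hei := hencb i
        have hej := hencb j
        have hpi := StmtAux.enc_pos (xx i (hFlt i))
        have hpj := StmtAux.enc_pos (xx j (hFlt j))
        rcases Bool.eq_false_or_eq_true (tb i (hFlt i)) with hbi | hbi <;>
          rcases Bool.eq_false_or_eq_true (tb j (hFlt j)) with hbj | hbj <;>
          rw [hbi, hbj] at hv htbne <;> simp at hv htbne <;> omega
      rw [htbeq] at hv
      have hxeq : xx i (hFlt i) = xx j (hFlt j) := StmtAux.enc_inj _ _ (by omega)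
      have hij' : (i:ℕ) ≠ (j:ℕ) := fun h => hne (Fin.ext h)
      rcases lt_or_gt_of_ne hij' with h | h
      · exact hdistinct i j (hFlt i) (hFlt j) h htbeq hxeq
      · exact hdistinct j i (hFlt j) (hFlt i) h htbeq.symm hxeq.symm
    have := Fintype.card_le_of_injective F hFinj
    simpa using this
  -- final arithmetic
  have hφpow : φ < 2 ^ (Nat.log 2 φ + 1) := Nat.lt_pow_succ_log_self one_lt_two φ
  have hnat : 2 ^ (L + 2) * φ < 2 ^ (ℓ + 2) := by
    calc 2 ^ (L + 2) * φ < 2 ^ (L + 2) * 2 ^ (Nat.log 2 φ + 1) := by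
          exact mul_lt_mul_of_pos_left hφpow (Nat.pow_pos (by norm_num))
      _ = 2 ^ (L + 2 + (Nat.log 2 φ + 1)) := (pow_add 2 _ _).symm
      _ = 2 ^ (ℓ + 2) := by
          congr 1
          omega
  have hkb : k ≤ 2 ^ (L + 2) + 1 := by omega
  have hkR : (k:ℝ) ≤ (2:ℝ) ^ (L + 2) + 1 := by exact_mod_cast hkb
  have hnatR : (2:ℝ) ^ (L + 2) * (φ:ℝ) ≤ (2:ℝ) ^ (ℓ + 2) := by
    have : ((2 ^ (L + 2) * φ : ℕ) : ℝ) ≤ ((2 ^ (ℓ + 2) : ℕ) : ℝ) := by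
      exact_mod_cast hnat.le
    push_cast at this
    linarith
  have hpow2 : (2:ℝ) ^ (ℓ + 2) = 4 * (2:ℝ) ^ ℓ := by ring
  rw [show (6:ℝ) * ((2:ℝ) ^ ℓ / (φ:ℝ)) = 6 * (2:ℝ) ^ ℓ / (φ:ℝ) by ring,
    le_div_iff₀ hφR]
  nlinarith [pow_pos (show (0:ℝ) < 2 by norm_num) ℓ, pow_pos (show (0:ℝ) < 2 by norm_num) (L+2)]
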